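/- Let B ⊂ ℝ^d be closed and convex, f of Legendre type and differentiable on G = int(dom f). If b⁺ is a left Bregman projection of a⁺ ∈ G onto B (i.e., b⁺ minimizes D(·, a⁺) over B) with b⁺ ∈ G, then for every b ∈ B ∩ dom f one has D(b, a⁺) ≥ D(b⁺, a⁺) + D(b, b⁺). In particular the rl-three-point inequality holds with constant ℓ = 1. -/

import Mathlib

open scoped RealInnerProductSpace

/-- For a closed convex set `B`, if `b⁺` is a left Bregman projection of `a⁺ ∈ G` onto `B`
with `b⁺ ∈ G`, then the rl-three-point inequality holds with constant `ℓ = 1`: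
`D(b, a⁺) ≥ D(b⁺, a⁺) + D(b, b⁺)` for every `b ∈ B`. -/
theorem left_bregman_projection_three_point_convex {d : ℕ}
    (f : EuclideanSpace ℝ (Fin d) → ℝ)
    (f' : EuclideanSpace ℝ (Fin d) → EuclideanSpace ℝ (Fin d))
    (G : Set (EuclideanSpace ℝ (Fin d))) (hG : IsOpen G)
    (hconv : ConvexOn ℝ Set.univ f)
    (hgrad : ∀ w ∈ G, HasGradientAt f (f' w) w)
    (B : Set (EuclideanSpace ℝ (Fin d)))
    (hBclosed : IsClosed B) (hBconv : Convex ℝ B)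
    (D : EuclideanSpace ℝ (Fin d) → EuclideanSpace ℝ (Fin d) → ℝ)
    (hD : ∀ x y, D x y = f x - f y - ⟪f' y, x - y⟫)
    (aplus bplus : EuclideanSpace ℝ (Fin d))
    (haplus : aplus ∈ G) (hbplusB : bplus ∈ B) (hbplusG : bplus ∈ G)
    (hmin : ∀ b ∈ B, D bplus aplus ≤ D b aplus) :
    ∀ b ∈ B, D b aplus ≥ D bplus aplus + D b bplus := by
  intro b hb
  set v : EuclideanSpace ℝ (Fin d) := b - bplus with hv
  -- derivative of t ↦ f (bplus + t • v) at 0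
  have hc : HasDerivAt (fun t : ℝ => bplus + t • v) v 0 := by
    simpa using ((hasDerivAt_id (0:ℝ)).smul_const v).const_add bplus
  have hfd := (hgrad bplus hbplusG).hasFDerivAt
  have hfd' : HasFDerivAt f ((InnerProductSpace.toDual ℝ (EuclideanSpace ℝ (Fin d)))
      (f' bplus)) (bplus + (0:ℝ) • v) := by simpa using hfd
  have hg : HasDerivAt (fun t : ℝ => f (bplus + t • v)) ⟪f' bplus, v⟫ 0 := by
    have h := hfd'.comp_hasDerivAt (x := (0:ℝ)) hc; simp at h; exact h
  -- key inequality from optimality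
  have key : ⟪f' aplus, v⟫ ≤ ⟪f' bplus, v⟫ := by
    have hslope : Filter.Tendsto (slope (fun t : ℝ => f (bplus + t • v)) 0)
        (nhdsWithin 0 (Set.Ioi 0)) (nhds ⟪f' bplus, v⟫) := by
      have := hasDerivAt_iff_tendsto_slope.mp hg
      exact this.mono_left (nhdsWithin_mono 0 (fun t ht => ne_of_gt ht))
    refine ge_of_tendsto hslope ?_
    filter_upwards [Ioc_mem_nhdsGT_of_mem (by norm_num : (0:ℝ) ∈ Set.Ico 0 1)] with t ht
    obtain ⟨ht0, ht1⟩ := ht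
    have hxB : bplus + t • v ∈ B := by
      have := hBconv hbplusB hb (by linarith : (0:ℝ) ≤ 1 - t) (le_of_lt ht0) (by ring)
      have heq : (1 - t) • bplus + t • b = bplus + t • v := by
        simp [hv, smul_sub, sub_smul]; abel
      rwa [heq] at this
    have hle := hmin _ hxB
    rw [hD, hD] at hle
    have hinner : ⟪f' aplus, bplus + t • v - aplus⟫ - ⟪f' aplus, bplus - aplus⟫
        = t * ⟪f' aplus, v⟫ := by
      rw [show bplus + t • v - aplus = (bplus - aplus) + t • v by abel]
      rw [inner_add_right, real_inner_smul_right]; ring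
    have h1 : t * ⟪f' aplus, v⟫ ≤ f (bplus + t • v) - f bplus := by linarith
    have hs : slope (fun t : ℝ => f (bplus + t • v)) 0 t
        = (f (bplus + t • v) - f bplus) / t := by
      rw [slope_def_field]; simp
    rw [hs, le_div_iff₀ ht0]
    linarith
  -- conclude
  rw [hD, hD, hD]
  have e1 : ⟪f' aplus, b - aplus⟫ = ⟪f' aplus, bplus - aplus⟫ + ⟪f' aplus, v⟫ := by
    rw [← inner_add_right]; congr 1; simp [hv]
  rw [e1]
  have : ⟪f' bplus, b - bplus⟫ = ⟪f' bplus, v⟫ := by rw [hv]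
  rw [this]
  linarith
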